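/- Let k, l ≥ 2 be integers, set n = kl, and assume n > 4. Then there exists a prime p not dividing D_n such that ν_p((k!)^l · l!) < ν_p(n!). -/

import Mathlib

open Nat

/-! ### Digit sum lemmas (base 2) -/

private lemma sd2_def {x : ℕ} (hx : 0 < x) :
    (Nat.digits 2 x).sum = x % 2 + (Nat.digits 2 (x / 2)).sum := by
  rw [Nat.digits_def' (by norm_num : 1 < 2) hx]; simp

private lemma sd2_eq_zero : ∀ x : ℕ, (Nat.digits 2 x).sum = 0 → x = 0 := by
  intro x
  induction x using Nat.strong_induction_on with
  | _ x ih =>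
    intro h
    rcases Nat.eq_zero_or_pos x with h0 | h0
    · exact h0
    · rw [sd2_def h0] at h
      have h2 : (Nat.digits 2 (x / 2)).sum = 0 := by omega
      have := ih (x / 2) (by omega) h2
      omega

private lemma sd2_pos {x : ℕ} (hx : 0 < x) : 1 ≤ (Nat.digits 2 x).sum := by
  by_contra h
  have h0 : (Nat.digits 2 x).sum = 0 := by omega
  have := sd2_eq_zero x h0
  omega

private lemma sd2_le : ∀ x : ℕ, (Nat.digits 2 x).sum ≤ x := by
  intro x
  induction x using Nat.strong_induction_on with
  | _ x ih =>
    rcases Nat.eq_zero_or_pos x with h0 | h0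
    · simp [h0]
    · rw [sd2_def h0]
      have := ih (x / 2) (by omega)
      omega

private lemma sd2_lt {x : ℕ} (hx : 2 ≤ x) : (Nat.digits 2 x).sum < x := by
  rw [sd2_def (by omega)]
  have := sd2_le (x / 2)
  omega

private lemma sd2_double : ∀ x : ℕ, (Nat.digits 2 (2 * x)).sum = (Nat.digits 2 x).sum := by
  intro x
  rcases Nat.eq_zero_or_pos x with h0 | h0
  · simp [h0]
  · rw [sd2_def (by omega : 0 < 2 * x)]
    have h1 : 2 * x % 2 = 0 := by omega
    have h2 : 2 * x / 2 = x := by omega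
    rw [h1, h2, Nat.zero_add]

private lemma sd2_add : ∀ N a b : ℕ, a + b ≤ N →
    (Nat.digits 2 (a + b)).sum ≤ (Nat.digits 2 a).sum + (Nat.digits 2 b).sum := by
  intro N
  induction N using Nat.strong_induction_on with
  | _ N ih =>
    intro a b hab
    rcases Nat.eq_zero_or_pos a with ha | ha
    · simp [ha]
    rcases Nat.eq_zero_or_pos b with hb | hb
    · simp [hb]
    have key : ∀ a' b' : ℕ, a' + b' < N →
        (Nat.digits 2 (a' + b')).sum ≤ (Nat.digits 2 a').sum + (Nat.digits 2 b').sum := by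
      intro a' b' h
      exact ih (a' + b') (by omega) a' b' le_rfl
    rcases Nat.even_or_odd a with hea | hea <;> rcases Nat.even_or_odd b with heb | heb
    · have h1 : a % 2 = 0 := by
        obtain ⟨t, ht⟩ := hea; omega
      have h2 : b % 2 = 0 := by
        obtain ⟨t, ht⟩ := heb; omega
      rw [sd2_def (by omega : 0 < a + b), sd2_def ha, sd2_def hb]
      have e2 : (a + b) / 2 = a / 2 + b / 2 := by omega
      rw [e2]
      have := key (a / 2) (b / 2) (by omega)
      omega
    · have h1 : a % 2 = 0 := by obtain ⟨t, ht⟩ := hea; omega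
      have h2 : b % 2 = 1 := by obtain ⟨t, ht⟩ := heb; omega
      rw [sd2_def (by omega : 0 < a + b), sd2_def ha, sd2_def hb]
      have e2 : (a + b) / 2 = a / 2 + b / 2 := by omega
      rw [e2]
      have := key (a / 2) (b / 2) (by omega)
      omega
    · have h1 : a % 2 = 1 := by obtain ⟨t, ht⟩ := hea; omega
      have h2 : b % 2 = 0 := by obtain ⟨t, ht⟩ := heb; omega
      rw [sd2_def (by omega : 0 < a + b), sd2_def ha, sd2_def hb]
      have e2 : (a + b) / 2 = a / 2 + b / 2 := by omega
      rw [e2]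
      have := key (a / 2) (b / 2) (by omega)
      omega
    · have h1 : a % 2 = 1 := by obtain ⟨t, ht⟩ := hea; omega
      have h2 : b % 2 = 1 := by obtain ⟨t, ht⟩ := heb; omega
      rw [sd2_def (by omega : 0 < a + b), sd2_def ha, sd2_def hb]
      have e2 : (a + b) / 2 = a / 2 + (b / 2 + 1) := by omega
      rw [e2]
      have k1 : (Nat.digits 2 (a / 2 + (b / 2 + 1))).sum ≤
          (Nat.digits 2 (a / 2)).sum + (Nat.digits 2 (b / 2 + 1)).sum := by
        apply key; omega
      have k2 : (Nat.digits 2 (b / 2 + 1)).sum ≤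
          (Nat.digits 2 (b / 2)).sum + (Nat.digits 2 1).sum := by
        apply key; omega
      have k3 : (Nat.digits 2 1).sum = 1 := by simp
      omega

private lemma sd2_add' (a b : ℕ) :
    (Nat.digits 2 (a + b)).sum ≤ (Nat.digits 2 a).sum + (Nat.digits 2 b).sum :=
  sd2_add (a + b) a b le_rfl

private lemma sd2_mul : ∀ b a : ℕ,
    (Nat.digits 2 (a * b)).sum ≤ (Nat.digits 2 a).sum * (Nat.digits 2 b).sum := by
  intro b
  induction b using Nat.strong_induction_on with
  | _ b ih =>
    intro a
    rcases Nat.eq_zero_or_pos b with hb | hb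
    · simp [hb]
    rcases Nat.even_or_odd b with heb | heb
    · have h1 : b % 2 = 0 := by obtain ⟨t, ht⟩ := heb; omega
      have e : a * b = 2 * (a * (b / 2)) := by
        have : b = 2 * (b / 2) := by omega
        calc a * b = a * (2 * (b / 2)) := by rw [← this]
          _ = 2 * (a * (b / 2)) := by ring
      rw [e, sd2_double, sd2_def hb, h1, Nat.zero_add]
      exact ih (b / 2) (by omega) a
    · have h1 : b % 2 = 1 := by obtain ⟨t, ht⟩ := heb; omega
      have e : a * b = 2 * (a * (b / 2)) + a := by
        have : b = 2 * (b / 2) + 1 := by omega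
        calc a * b = a * (2 * (b / 2) + 1) := by rw [← this]
          _ = 2 * (a * (b / 2)) + a := by ring
      rw [e, sd2_def hb, h1]
      calc (Nat.digits 2 (2 * (a * (b / 2)) + a)).sum
          ≤ (Nat.digits 2 (2 * (a * (b / 2)))).sum + (Nat.digits 2 a).sum := sd2_add' _ _
        _ = (Nat.digits 2 (a * (b / 2))).sum + (Nat.digits 2 a).sum := by rw [sd2_double]
        _ ≤ (Nat.digits 2 a).sum * (Nat.digits 2 (b / 2)).sum + (Nat.digits 2 a).sum :=
            Nat.add_le_add_right (ih (b / 2) (by omega) a) _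
        _ = (Nat.digits 2 a).sum * (1 + (Nat.digits 2 (b / 2)).sum) := by ring

private lemma sd2_pow_of_le_one : ∀ y : ℕ, 0 < y → (Nat.digits 2 y).sum ≤ 1 → ∃ a, y = 2 ^ a := by
  intro y
  induction y using Nat.strong_induction_on with
  | _ y ih =>
    intro hy0 hy1
    rcases Nat.even_or_odd y with hey | hey
    · have h1 : y % 2 = 0 := by obtain ⟨t, ht⟩ := hey; omega
      have h2 : 0 < y / 2 := by omega
      rw [sd2_def hy0, h1] at hy1
      obtain ⟨a, ha⟩ := ih (y / 2) (by omega) h2 (by omega)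
      exact ⟨a + 1, by rw [pow_succ]; omega⟩
    · have h1 : y % 2 = 1 := by obtain ⟨t, ht⟩ := hey; omega
      rw [sd2_def hy0, h1] at hy1
      have h2 : (Nat.digits 2 (y / 2)).sum = 0 := by omega
      have := sd2_eq_zero _ h2
      exact ⟨0, by omega⟩

private lemma sd2_two_le {x : ℕ} (hx : 2 ≤ x) (hpow : ∀ a : ℕ, x ≠ 2 ^ a) :
    2 ≤ (Nat.digits 2 x).sum := by
  by_contra h
  obtain ⟨a, ha⟩ := sd2_pow_of_le_one x (by omega) (by omega)
  exact hpow a ha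

/-! ### Derangement congruences -/

private lemma nd_succ_zmod (p t : ℕ) :
    ((numDerangements (t + 1) : ℤ) : ZMod p) =
      ((t : ZMod p) + 1) * ((numDerangements t : ℤ) : ZMod p) - (-1) ^ t := by
  have h := numDerangements_succ t
  rw [h]
  push_cast
  ring

private lemma nd_chain (p : ℕ) {m : ℕ} (hm : 0 < m) (hp : ((m : ℕ) : ZMod p) = 0) :
    ((numDerangements m : ℤ) : ZMod p) = (-1) ^ m ∧
    ((numDerangements (m + 2) : ℤ) : ZMod p) = (-1) ^ m ∧
    ((numDerangements (m + 3) : ℤ) : ZMod p) = 2 * (-1) ^ m := by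
  obtain ⟨r, rfl⟩ : ∃ r, m = r + 1 := ⟨m - 1, by omega⟩
  have h0 : ((r : ZMod p) + 1) = 0 := by push_cast at hp; exact_mod_cast hp
  have hr : (r : ZMod p) = -1 := by linear_combination h0
  have c1 : ((numDerangements (r + 1) : ℤ) : ZMod p) = (-1) ^ (r + 1) := by
    rw [nd_succ_zmod, hr]
    ring
  have c2 : ((numDerangements (r + 2) : ℤ) : ZMod p) = 0 := by
    have h := nd_succ_zmod p (r + 1)
    rw [show r + 1 + 1 = r + 2 from rfl] at h
    rw [h, c1]
    push_cast
    rw [hr]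
    ring
  have c3 : ((numDerangements (r + 3) : ℤ) : ZMod p) = (-1) ^ (r + 1) := by
    have h := nd_succ_zmod p (r + 2)
    rw [show r + 2 + 1 = r + 3 from rfl] at h
    rw [h, c2]
    push_cast
    rw [hr]
    ring
  have c4 : ((numDerangements (r + 4) : ℤ) : ZMod p) = 2 * (-1) ^ (r + 1) := by
    have h := nd_succ_zmod p (r + 3)
    rw [show r + 3 + 1 = r + 4 from rfl] at h
    rw [h, c3]
    push_cast
    rw [hr]
    ring
  exact ⟨c1, by rw [show r + 1 + 2 = r + 3 from rfl]; exact c3,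
    by rw [show r + 1 + 3 = r + 4 from rfl]; exact c4⟩

private lemma nd_cast_eq_zero {p n : ℕ} (h : p ∣ numDerangements n) :
    ((numDerangements n : ℤ) : ZMod p) = 0 := by
  have h2 : ((numDerangements n : ℕ) : ZMod p) = 0 := (ZMod.natCast_eq_zero_iff _ _).2 h
  exact_mod_cast h2

private lemma nd_neg_one_pow_ne_zero {p : ℕ} [Fact p.Prime] (m : ℕ) :
    ((-1 : ZMod p)) ^ m ≠ 0 := by
  apply pow_ne_zero
  simp only [ne_eq, neg_eq_zero]
  exact one_ne_zero

private lemma not_dvd_nd_self {p n : ℕ} (hp : p.Prime) (hn : 1 ≤ n) (hd : p ∣ n) :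
    ¬ p ∣ numDerangements n := by
  intro hdvd
  haveI : Fact p.Prime := ⟨hp⟩
  have h0 : ((n : ℕ) : ZMod p) = 0 := (ZMod.natCast_eq_zero_iff _ _).2 hd
  have hc := (nd_chain p hn h0).1
  rw [nd_cast_eq_zero hdvd] at hc
  exact (nd_neg_one_pow_ne_zero n) hc.symm

private lemma not_dvd_nd_sub_two {p n : ℕ} (hp : p.Prime) (hn : 3 ≤ n) (hd : p ∣ n - 2) :
    ¬ p ∣ numDerangements n := by
  intro hdvd
  haveI : Fact p.Prime := ⟨hp⟩
  have hm1 : 0 < n - 2 := by omega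
  have h0 : (((n - 2 : ℕ)) : ZMod p) = 0 := (ZMod.natCast_eq_zero_iff _ _).2 hd
  have hc := (nd_chain p hm1 h0).2.1
  rw [show n - 2 + 2 = n by omega, nd_cast_eq_zero hdvd] at hc
  exact (nd_neg_one_pow_ne_zero (n - 2)) hc.symm

private lemma not_dvd_nd_sub_three {p n : ℕ} (hp : p.Prime) (hp2 : p ≠ 2) (hn : 4 ≤ n)
    (hd : p ∣ n - 3) : ¬ p ∣ numDerangements n := by
  intro hdvd
  haveI : Fact p.Prime := ⟨hp⟩
  have hm1 : 0 < n - 3 := by omega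
  have h0 : (((n - 3 : ℕ)) : ZMod p) = 0 := (ZMod.natCast_eq_zero_iff _ _).2 hd
  have hc := (nd_chain p hm1 h0).2.2
  rw [show n - 3 + 3 = n by omega, nd_cast_eq_zero hdvd] at hc
  have h2 : ((2 : ℕ) : ZMod p) ≠ 0 := by
    rw [Ne, ZMod.natCast_eq_zero_iff]
    intro h
    rcases (Nat.prime_two.eq_one_or_self_of_dvd p h) with h1 | h1
    · exact hp.one_lt.ne' h1
    · exact hp2 h1
  have hne : (2 : ZMod p) * (-1) ^ (n - 3) ≠ 0 := by
    apply mul_ne_zero _ (nd_neg_one_pow_ne_zero (n - 3))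
    exact_mod_cast h2
  exact hne hc.symm

/-! ### Valuation machinery -/

private lemma div_split {Q k l : ℕ} (hQ : 0 < Q) :
    (k * l) / Q = l * (k / Q) + (k % Q) * l / Q := by
  conv_lhs => rw [← Nat.div_add_mod k Q]
  rw [show (Q * (k / Q) + k % Q) * l = Q * (l * (k / Q)) + (k % Q) * l by ring]
  rw [Nat.mul_add_div hQ]

private lemma claimB {q k l : ℕ} (hq : 2 ≤ q) (hk : ¬ q ∣ k) (i : ℕ) (hi : 1 ≤ i) :
    l * (k / q ^ i) + l / q ^ i ≤ (k * l) / q ^ i := by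
  have hQ : 0 < q ^ i := pow_pos (by omega) i
  rw [div_split hQ]
  have hmod : 1 ≤ k % q ^ i := by
    rcases Nat.eq_zero_or_pos (k % q ^ i) with h | h
    · exfalso
      exact hk (dvd_trans (dvd_pow_self q (by omega)) (Nat.dvd_of_mod_eq_zero h))
    · exact h
  have hle : l / q ^ i ≤ (k % q ^ i) * l / q ^ i := by
    apply Nat.div_le_div_right
    calc l = 1 * l := (one_mul l).symm
      _ ≤ (k % q ^ i) * l := Nat.mul_le_mul_right l hmod
  omega

private lemma master {q k l j : ℕ} (hq : q.Prime) (hk : ¬ q ∣ k) (hk0 : 0 < k) (hl0 : 0 < l)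
    (hj : 1 ≤ j) (hjn : q ^ j ≤ k * l)
    (hwit : l / q ^ j + 1 ≤ (k % q ^ j) * l / q ^ j) :
    padicValNat q ((Nat.factorial k) ^ l * Nat.factorial l) <
      padicValNat q (Nat.factorial (k * l)) := by
  haveI : Fact q.Prime := ⟨hq⟩
  have hq1 : 1 < q := hq.one_lt
  have hkl0 : 0 < k * l := Nat.mul_pos hk0 hl0
  have hlogk : Nat.log q k < Nat.log q (k * l) + 1 := by
    have h1 : k ≤ k * l := by
      calc k = k * 1 := by ring
        _ ≤ k * l := Nat.mul_le_mul_left k (by omega)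
    have := Nat.log_mono_right (b := q) h1
    omega
  have hlogl : Nat.log q l < Nat.log q (k * l) + 1 := by
    have h1 : l ≤ k * l := by
      calc l = 1 * l := by ring
        _ ≤ k * l := Nat.mul_le_mul_right l (by omega)
    have := Nat.log_mono_right (b := q) h1
    omega
  have hlogn : Nat.log q (k * l) < Nat.log q (k * l) + 1 := by omega
  rw [padicValNat.mul (pow_ne_zero _ (Nat.factorial_ne_zero k)) (Nat.factorial_ne_zero l),
    padicValNat.pow _ _,
    padicValNat_factorial hlogk, padicValNat_factorial hlogl, padicValNat_factorial hlogn,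
    Finset.mul_sum, ← Finset.sum_add_distrib]
  apply Finset.sum_lt_sum
  · intro i hi
    rw [Finset.mem_Ico] at hi
    exact claimB (by omega) hk i hi.1
  · refine ⟨j, ?_, ?_⟩
    · rw [Finset.mem_Ico]
      refine ⟨hj, ?_⟩
      have : j ≤ Nat.log q (k * l) := (Nat.le_log_iff_pow_le hq1 (by omega)).2 hjn
      omega
    · have hQ : 0 < q ^ j := pow_pos (by omega) j
      rw [div_split hQ]
      omega

private lemma witness_star {q k l : ℕ} (hq : q.Prime) (hk2 : 2 ≤ k) (hk : ¬ q ∣ k)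
    (hlq : q ≤ l) :
    ∃ j, 1 ≤ j ∧ q ^ j ≤ k * l ∧ l / q ^ j + 1 ≤ (k % q ^ j) * l / q ^ j := by
  haveI : Fact q.Prime := ⟨hq⟩
  set s := padicValNat q (k - 1) with hs
  have h1 : q ^ s ∣ k - 1 := pow_padicValNat_dvd
  have h2 : ¬ q ^ (s + 1) ∣ (k - 1) := pow_succ_padicValNat_not_dvd (by omega)
  have hQ0 : 0 < q ^ (s + 1) := pow_pos hq.pos _
  refine ⟨s + 1, by omega, ?_, ?_⟩
  · have h3 : q ^ s ≤ k - 1 := Nat.le_of_dvd (by omega) h1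
    calc q ^ (s + 1) = q ^ s * q := by rw [pow_succ]
      _ ≤ (k - 1) * l := Nat.mul_le_mul h3 hlq
      _ ≤ k * l := Nat.mul_le_mul_right l (by omega)
  · set Q := q ^ (s + 1) with hQdef
    have h3 : (k - 1) % Q ≠ 0 := fun h => h2 (Nat.dvd_of_mod_eq_zero h)
    have h4 : q ^ s ∣ (k - 1) % Q := by
      rw [Nat.dvd_mod_iff (pow_dvd_pow q (Nat.le_succ s))]
      exact h1
    have h5 : q ^ s ≤ (k - 1) % Q := Nat.le_of_dvd (by omega) h4
    have hdm := Nat.div_add_mod (k - 1) Q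
    have h6 : (k - 1) % Q + 1 ≠ Q := by
      intro h
      apply hk
      have e : Q * ((k - 1) / Q + 1) = Q * ((k - 1) / Q) + Q := by ring
      have hQk : Q ∣ k := ⟨(k - 1) / Q + 1, by omega⟩
      exact dvd_trans (dvd_pow_self q (Nat.succ_ne_zero s)) hQk
    have h7 : (k - 1) % Q + 1 < Q := by
      have := Nat.mod_lt (k - 1) hQ0
      omega
    have h8 : k % Q = (k - 1) % Q + 1 := by
      have e : k = Q * ((k - 1) / Q) + ((k - 1) % Q + 1) := by omega
      conv_lhs => rw [e]
      rw [Nat.mul_add_mod, Nat.mod_eq_of_lt h7]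
    have h9 : q ^ s + 1 ≤ k % Q := by omega
    have h10 : Q + l ≤ (k % Q) * l := by
      calc Q + l = q ^ s * q + l := by rw [hQdef, pow_succ]
        _ ≤ q ^ s * l + l := by
            have := Nat.mul_le_mul_left (q ^ s) hlq
            omega
        _ = (q ^ s + 1) * l := by ring
        _ ≤ (k % Q) * l := Nat.mul_le_mul_right l h9
    calc l / Q + 1 = (l + Q) / Q := (Nat.add_div_right l hQ0).symm
      _ ≤ (k % Q) * l / Q := Nat.div_le_div_right (by omega)

private lemma witness_corner {q k l c : ℕ} (hq0 : 0 < q) (hcq : c < q) (hlq : l < q)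
    (hmod : (k * l) % q = c) (hne : (k % q) * l ≠ c) :
    q ^ 1 ≤ k * l ∧ l / q ^ 1 + 1 ≤ (k % q ^ 1) * l / q ^ 1 := by
  have hx : ((k % q) * l) % q = c := by
    rw [Nat.mod_mul_mod]
    exact hmod
  have hxq : q ≤ (k % q) * l := by
    by_contra h
    push_neg at h
    rw [Nat.mod_eq_of_lt h] at hx
    exact hne hx
  constructor
  · rw [pow_one]
    exact le_trans hxq (Nat.mul_le_mul_right l (Nat.mod_le k q))
  · simp only [pow_one]
    have hd1 : l / q = 0 := Nat.div_eq_of_lt hlq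
    have hd2 : 1 ≤ (k % q) * l / q := (Nat.one_le_div_iff hq0).2 hxq
    omega

private lemma diamond {k l : ℕ} (hk2 : 2 ≤ k) (hl2 : 2 ≤ l) (hkpow : ∀ a : ℕ, k ≠ 2 ^ a) :
    padicValNat 2 ((Nat.factorial k) ^ l * Nat.factorial l) <
      padicValNat 2 (Nat.factorial (k * l)) := by
  haveI : Fact (Nat.Prime 2) := ⟨Nat.prime_two⟩
  have ek : padicValNat 2 (Nat.factorial k) = k - (Nat.digits 2 k).sum := by
    have h := sub_one_mul_padicValNat_factorial (p := 2) k
    simpa using h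
  have el : padicValNat 2 (Nat.factorial l) = l - (Nat.digits 2 l).sum := by
    have h := sub_one_mul_padicValNat_factorial (p := 2) l
    simpa using h
  have en : padicValNat 2 (Nat.factorial (k * l)) = k * l - (Nat.digits 2 (k * l)).sum := by
    have h := sub_one_mul_padicValNat_factorial (p := 2) (k * l)
    simpa using h
  rw [padicValNat.mul (pow_ne_zero _ (Nat.factorial_ne_zero k)) (Nat.factorial_ne_zero l),
    padicValNat.pow _ _, ek, el, en]
  set sk := (Nat.digits 2 k).sum with hsk
  set sl := (Nat.digits 2 l).sum with hsl
  set sn := (Nat.digits 2 (k * l)).sum with hsn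
  have hskk : sk ≤ k := sd2_le k
  have hsll : sl < l := sd2_lt hl2
  have hsl1 : 1 ≤ sl := sd2_pos (by omega)
  have hsk2 : 2 ≤ sk := sd2_two_le hk2 hkpow
  have hsnn : sn ≤ k * l := sd2_le (k * l)
  have hsub : sn ≤ sk * sl := sd2_mul l k
  have key : sn + l + 1 ≤ l * sk + sl := by
    obtain ⟨a, ha⟩ : ∃ a, sk = 2 + a := ⟨sk - 2, by omega⟩
    obtain ⟨d, hd⟩ : ∃ d, l = sl + 1 + d := ⟨l - sl - 1, by omega⟩
    have expand1 : l * sk = 2 * sl + a * sl + 2 + a + 2 * d + a * d := by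
      rw [ha, hd]; ring
    have expand2 : sk * sl = 2 * sl + a * sl := by rw [ha]; ring
    have := Nat.zero_le (a * d)
    omega
  have hA : l * (k - sk) + l * sk = k * l := by
    rw [← Nat.mul_add, Nat.sub_add_cancel hskk]
    ring
  have final : ∀ A X Y : ℕ, A + X = Y → sn + l + 1 ≤ X + sl → sn ≤ Y → sl ≤ l →
      A + (l - sl) < Y - sn := by
    intro A X Y e1 e2 e3 e4
    omega
  exact final (l * (k - sk)) (l * sk) (k * l) hA key hsnn (by omega)

/-! ### Main theorem -/

theorem exists_prime_strict_valuation_imprimitive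
    (k l : ℕ) (hk : 2 ≤ k) (hl : 2 ≤ l) (n : ℕ) (hn : n = k * l) (hn4 : 4 < n) :
    ∃ p : ℕ, p.Prime ∧ ¬ p ∣ numDerangements n ∧
      padicValNat p ((Nat.factorial k) ^ l * Nat.factorial l) < padicValNat p (Nat.factorial n) := by
  subst hn
  have hk0 : 0 < k := by omega
  have hl0 : 0 < l := by omega
  by_cases h2 : 2 ∣ k * l
  case neg =>
    -- n odd: take any prime q dividing n - 2
    have hne2 : k * l - 2 ≠ 1 := by omega
    obtain ⟨q, hq, hqd⟩ := Nat.exists_prime_and_dvd hne2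
    have hq2 : q ≠ 2 := by
      rintro rfl
      exact h2 (by omega)
    have hqn : ¬ q ∣ k * l := by
      intro hqn'
      have hsub : k * l - (k * l - 2) = 2 := by omega
      have hd2 : q ∣ 2 := by
        have := Nat.dvd_sub hqn' hqd
        rwa [hsub] at this
      rcases (Nat.prime_two.eq_one_or_self_of_dvd q hd2) with h | h
      · exact hq.one_lt.ne' h
      · exact hq2 h
    have hqk : ¬ q ∣ k := fun h => hqn (h.mul_right l)
    have hlodd : ¬ 2 ∣ l := fun h => h2 (h.mul_left k)
    have hl3 : 3 ≤ l := by omega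
    refine ⟨q, hq, not_dvd_nd_sub_two hq (by omega) hqd, ?_⟩
    by_cases hlq : q ≤ l
    · obtain ⟨j, hj1, hj2, hj3⟩ := witness_star hq hk hqk hlq
      exact master hq hqk hk0 hl0 hj1 hj2 hj3
    · push_neg at hlq
      have hq3 : 2 < q := by
        have := hq.two_le
        omega
      have hmod : (k * l) % q = 2 := by
        obtain ⟨t, ht⟩ := hqd
        have e : k * l = q * t + 2 := by omega
        rw [e, Nat.mul_add_mod, Nat.mod_eq_of_lt (by omega)]
      have hne' : (k % q) * l ≠ 2 := by
        intro hc
        rcases Nat.eq_zero_or_pos (k % q) with h | h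
        · rw [h, zero_mul] at hc; omega
        · have : l ≤ (k % q) * l := by
            calc l = 1 * l := (one_mul l).symm
              _ ≤ (k % q) * l := Nat.mul_le_mul_right l h
          omega
      obtain ⟨hw1, hw2⟩ := witness_corner (by omega) (by omega : 2 < q) hlq hmod hne'
      exact master hq hqk hk0 hl0 le_rfl hw1 hw2
  case pos =>
    by_cases hkpow : ∀ a : ℕ, k ≠ 2 ^ a
    · -- k not a power of two: use q = 2
      exact ⟨2, Nat.prime_two, not_dvd_nd_self Nat.prime_two (by omega) h2,
        diamond hk hl hkpow⟩
    · push_neg at hkpow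
      obtain ⟨a, rfl⟩ := hkpow
      have ha1 : 1 ≤ a := by
        by_contra h
        have : a = 0 := by omega
        rw [this] at hk
        norm_num at hk
      by_cases hlpow : ∃ b : ℕ, l = 2 ^ b
      · -- both powers of two: take any prime q dividing n - 3
        obtain ⟨b, rfl⟩ := hlpow
        have hb1 : 1 ≤ b := by
          by_contra h
          have : b = 0 := by omega
          rw [this] at hl
          norm_num at hl
        have hne3 : 2 ^ a * 2 ^ b - 3 ≠ 1 := by omega
        obtain ⟨q, hq, hqd⟩ := Nat.exists_prime_and_dvd hne3
        have hq2 : q ≠ 2 := by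
          rintro rfl
          omega
        have hq3 : q ≠ 3 := by
          rintro rfl
          have h3n : (3 : ℕ) ∣ 2 ^ a * 2 ^ b := by omega
          rcases (Nat.prime_three.dvd_mul).1 h3n with h | h
          · have := Nat.prime_three.dvd_of_dvd_pow h
            omega
          · have := Nat.prime_three.dvd_of_dvd_pow h
            omega
        have hq5 : 3 < q := by
          have h2le := hq.two_le
          have h4 : q ≠ 4 := by
            rintro rfl
            norm_num at hq
          omega
        have hqk : ¬ q ∣ 2 ^ a := by
          intro h
          have := hq.dvd_of_dvd_pow h
          rcases (Nat.prime_two.eq_one_or_self_of_dvd q this) with h' | h'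
          · exact hq.one_lt.ne' h'
          · exact hq2 h'
        refine ⟨q, hq, not_dvd_nd_sub_three hq hq2 (by omega) hqd, ?_⟩
        by_cases hlq : q ≤ 2 ^ b
        · obtain ⟨j, hj1, hj2, hj3⟩ := witness_star hq hk hqk hlq
          exact master hq hqk hk0 hl0 hj1 hj2 hj3
        · push_neg at hlq
          have hmod : (2 ^ a * 2 ^ b) % q = 3 := by
            obtain ⟨t, ht⟩ := hqd
            have e : 2 ^ a * 2 ^ b = q * t + 3 := by omega
            rw [e, Nat.mul_add_mod, Nat.mod_eq_of_lt (by omega)]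
          have hne' : (2 ^ a % q) * 2 ^ b ≠ 3 := by
            intro hc
            have h2l : 2 ∣ 2 ^ b := dvd_pow_self 2 (by omega)
            have : 2 ∣ (2 ^ a % q) * 2 ^ b := h2l.mul_left _
            omega
          obtain ⟨hw1, hw2⟩ := witness_corner (by omega) (by omega : 3 < q) hlq hmod hne'
          exact master hq hqk hk0 hl0 le_rfl hw1 hw2
      · -- l not a power of two: it has an odd prime factor
        push_neg at hlpow
        haveI : Fact (Nat.Prime 2) := ⟨Nat.prime_two⟩
        set c := padicValNat 2 l with hc
        have hpow2 : ¬ (2 : ℕ) ^ (c + 1) ∣ l :=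
          pow_succ_padicValNat_not_dvd (show l ≠ 0 by omega)
        obtain ⟨m, hm⟩ : (2 : ℕ) ^ c ∣ l := pow_padicValNat_dvd
        have hmodd : ¬ 2 ∣ m := by
          intro hdm
          obtain ⟨t, ht⟩ := hdm
          exact hpow2 ⟨t, by rw [hm, ht, pow_succ]; ring⟩
        have hm1 : m ≠ 1 := by
          intro h
          exact hlpow c (by rw [hm, h, mul_one])
        obtain ⟨q, hq, hqm⟩ := Nat.exists_prime_and_dvd hm1
        have hq2 : q ≠ 2 := by
          rintro rfl
          exact hmodd hqm
        have hql : q ∣ l := by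
          rw [hm]
          exact hqm.mul_left _
        have hqk : ¬ q ∣ 2 ^ a := by
          intro h
          have := hq.dvd_of_dvd_pow h
          rcases (Nat.prime_two.eq_one_or_self_of_dvd q this) with h' | h'
          · exact hq.one_lt.ne' h'
          · exact hq2 h'
        have hlq : q ≤ l := Nat.le_of_dvd hl0 hql
        have hqn : q ∣ 2 ^ a * l := hql.mul_left _
        obtain ⟨j, hj1, hj2, hj3⟩ := witness_star hq hk hqk hlq
        exact ⟨q, hq, not_dvd_nd_self hq (by omega) hqn,
          master hq hqk hk0 hl0 hj1 hj2 hj3⟩
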